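/- Let R be an integral domain with quotient field K and let J be a nonzero proper finitely generated ideal of R. Then (R :_K J) = R, where (R :_K J) = {x ∈ K : xJ ⊆ R}, if and only if the ideal J·R[X] of the polynomial ring R[X] contains a weak regular sequence of length two, i.e., there exist f, g ∈ J·R[X] such that f is a nonzerodivisor on R[X] and g is a nonzerodivisor on R[X]/(f). -/

import Mathlib

open Polynomial

private lemma mem_nzd_of_ringEquiv_aux {A B : Type*} [CommRing A] [CommRing B]
    (e : A ≃+* B) {x : A} (h : e x ∈ nonZeroDivisors B) : x ∈ nonZeroDivisors A := by
  rw [mem_nonZeroDivisors_iff_right] at h ⊢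
  intro z hz
  have h2 : e z * e x = 0 := by rw [← map_mul, hz, map_zero]
  have h3 := h _ h2
  exact e.injective (by simpa using h3)

theorem inv_eq_ring_iff_weak_regular_sequence_in_polynomial_ring
    (R : Type*) [CommRing R] [IsDomain R] (J : Ideal R)
    (hbot : J ≠ ⊥) (htop : J ≠ ⊤) (hfg : J.FG) :
    {x : FractionRing R | ∀ a ∈ J, x * algebraMap R (FractionRing R) a ∈
        Set.range (algebraMap R (FractionRing R))} =
      Set.range (algebraMap R (FractionRing R)) ↔
    ∃ f ∈ J.map (Polynomial.C : R →+* Polynomial R),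
      ∃ g ∈ J.map (Polynomial.C : R →+* Polynomial R),
        f ∈ nonZeroDivisors (Polynomial R) ∧
        Ideal.Quotient.mk (Ideal.span {f}) g ∈
          nonZeroDivisors (Polynomial R ⧸ Ideal.span {f}) := by
  classical
  have hinj : Function.Injective (algebraMap R (FractionRing R)) :=
    IsFractionRing.injective R (FractionRing R)
  constructor
  · intro hset
    obtain ⟨T, hT⟩ := hfg
    obtain ⟨a, haJ, ha0⟩ := Submodule.exists_mem_ne_zero_of_ne_bot hbot
    have haK : algebraMap R (FractionRing R) a ≠ 0 := fun h => ha0 (hinj (by simpa using h))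
    set l : List R := T.toList with hl
    set g : Polynomial R := ∑ i ∈ Finset.range l.length, C (l.getD i 0) * X ^ i with hgdef
    have hgcoeff : ∀ m, g.coeff m = if m < l.length then l.getD m 0 else 0 := by
      intro m
      rw [hgdef, Polynomial.finset_sum_coeff]
      simp only [Polynomial.coeff_C_mul, Polynomial.coeff_X_pow, mul_ite, mul_one, mul_zero]
      rw [Finset.sum_ite_eq (Finset.range l.length) m (fun i => l.getD i 0)]
      simp [Finset.mem_range]
    have hlJ : ∀ i, i < l.length → l.getD i 0 ∈ J := by
      intro i hi
      have hmem : l.getD i 0 ∈ T := by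
        rw [List.getD_eq_getElem _ _ hi]
        exact Finset.mem_toList.1 (List.getElem_mem hi)
      rw [← hT]
      exact Submodule.subset_span hmem
    have hgJ : g ∈ J.map (Polynomial.C : R →+* Polynomial R) := by
      rw [Ideal.mem_map_C_iff]
      intro n
      rw [hgcoeff]
      split
      · exact hlJ _ ‹_›
      · exact J.zero_mem
    refine ⟨C a, Ideal.mem_map_of_mem _ haJ, g, hgJ, ?_, ?_⟩
    · exact mem_nonZeroDivisors_of_ne_zero (by simpa using ha0)
    · have hspan : (Ideal.span {(C a : Polynomial R)} : Ideal (Polynomial R)) =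
          (Ideal.span {a}).map (C : R →+* Polynomial R) := by
        rw [Ideal.map_span, Set.image_singleton]
      rw [hspan]
      apply mem_nzd_of_ringEquiv_aux
        ((Ideal.span {a}).polynomialQuotientEquivQuotientPolynomial).symm
      rw [Ideal.polynomialQuotientEquivQuotientPolynomial_symm_mk]
      rw [Polynomial.mem_nonZeroDivisors_iff]
      intro t ht
      obtain ⟨s, rfl⟩ := Ideal.Quotient.mk_surjective t
      rw [Ideal.Quotient.eq_zero_iff_mem]
      have hann : ∀ m, s * g.coeff m ∈ Ideal.span {a} := by
        intro m
        have h1 := congrArg (fun p => Polynomial.coeff p m) ht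
        simp only [Polynomial.coeff_smul, Polynomial.coeff_map, Polynomial.coeff_zero,
          smul_eq_mul, ← map_mul] at h1
        exact Ideal.Quotient.eq_zero_iff_mem.1 h1
      have hsJ : ∀ b ∈ J, s * b ∈ Ideal.span {a} := by
        intro b hb
        rw [← hT] at hb
        refine Submodule.span_induction ?_ ?_ ?_ ?_ hb
        · intro b hbT
          obtain ⟨i, hi, rfl⟩ := List.mem_iff_getElem.1 (Finset.mem_toList.2 hbT)
          have : l[i] = g.coeff i := by
            rw [hgcoeff, if_pos hi, List.getD_eq_getElem _ _ hi]
          rw [this]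
          exact hann i
        · simp
        · intro b c _ _ hsb hsc
          rw [mul_add]
          exact Ideal.add_mem _ hsb hsc
        · intro r b _ hsb
          rw [smul_eq_mul, mul_left_comm]
          exact Ideal.mul_mem_left _ _ hsb
      have hx : (algebraMap R (FractionRing R) s / algebraMap R (FractionRing R) a) ∈
          {x : FractionRing R | ∀ b ∈ J, x * algebraMap R (FractionRing R) b ∈
            Set.range (algebraMap R (FractionRing R))} := by
        intro b hb
        obtain ⟨c, hc⟩ := Ideal.mem_span_singleton'.1 (hsJ b hb)
        refine ⟨c, ?_⟩
        rw [div_mul_eq_mul_div, eq_div_iff haK, ← map_mul, ← map_mul]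
        exact congrArg _ (by linear_combination hc)
      rw [hset] at hx
      obtain ⟨u, hu⟩ := hx
      rw [eq_div_iff haK, ← map_mul] at hu
      exact Ideal.mem_span_singleton'.2 ⟨u, hinj hu⟩
  · rintro ⟨f, hf, g, hg, hfnzd, hgnzd⟩
    have hf0 : f ≠ 0 := nonZeroDivisors.ne_zero hfnzd
    apply Set.Subset.antisymm
    · intro x hx
      simp only [Set.mem_setOf_eq] at hx
      have hxf : ∀ n, ∃ c, algebraMap R (FractionRing R) c =
          x * algebraMap R (FractionRing R) (f.coeff n) :=
        fun n => hx _ (Ideal.mem_map_C_iff.1 hf n)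
      have hxg : ∀ n, ∃ c, algebraMap R (FractionRing R) c =
          x * algebraMap R (FractionRing R) (g.coeff n) :=
        fun n => hx _ (Ideal.mem_map_C_iff.1 hg n)
      choose rf hrf using hxf
      choose rg hrg using hxg
      set p : Polynomial R := ∑ n ∈ f.support, Polynomial.monomial n (rf n) with hpdef
      set q : Polynomial R := ∑ n ∈ g.support, Polynomial.monomial n (rg n) with hqdef
      have hpcoeff : ∀ n, p.coeff n = rf n := by
        intro n
        rw [hpdef, Polynomial.finset_sum_coeff]
        simp only [Polynomial.coeff_monomial]
        rw [Finset.sum_ite_eq' f.support n rf]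
        split
        · rfl
        · next h =>
            refine (hinj ?_).symm
            rw [hrf, Polynomial.notMem_support_iff.1 h, map_zero, mul_zero]
      have hqcoeff : ∀ n, q.coeff n = rg n := by
        intro n
        rw [hqdef, Polynomial.finset_sum_coeff]
        simp only [Polynomial.coeff_monomial]
        rw [Finset.sum_ite_eq' g.support n rg]
        split
        · rfl
        · next h =>
            refine (hinj ?_).symm
            rw [hrg, Polynomial.notMem_support_iff.1 h, map_zero, mul_zero]
      have hpmap : p.map (algebraMap R (FractionRing R)) =
          Polynomial.C x * f.map (algebraMap R (FractionRing R)) := by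
        ext n
        rw [Polynomial.coeff_map, Polynomial.coeff_C_mul, Polynomial.coeff_map, hpcoeff, hrf]
      have hqmap : q.map (algebraMap R (FractionRing R)) =
          Polynomial.C x * g.map (algebraMap R (FractionRing R)) := by
        ext n
        rw [Polynomial.coeff_map, Polynomial.coeff_C_mul, Polynomial.coeff_map, hqcoeff, hrg]
      have hpq : p * g = q * f := by
        apply Polynomial.map_injective (algebraMap R (FractionRing R)) hinj
        rw [Polynomial.map_mul, Polynomial.map_mul, hpmap, hqmap]
        ring
      have h0 : Ideal.Quotient.mk (Ideal.span {f}) p *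
          Ideal.Quotient.mk (Ideal.span {f}) g = 0 := by
        rw [← map_mul, hpq, map_mul,
          Ideal.Quotient.eq_zero_iff_mem.2 (Ideal.mem_span_singleton_self f), mul_zero]
      have hp0 := mem_nonZeroDivisors_iff_right.1 hgnzd _ h0
      obtain ⟨h, hh⟩ := Ideal.mem_span_singleton'.1 (Ideal.Quotient.eq_zero_iff_mem.1 hp0)
      have hfmap : f.map (algebraMap R (FractionRing R)) ≠ 0 := fun hcontr =>
        hf0 (Polynomial.map_injective _ hinj (by simpa using hcontr))
      have hCx : Polynomial.C x = h.map (algebraMap R (FractionRing R)) := by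
        have h2 : h.map (algebraMap R (FractionRing R)) *
            f.map (algebraMap R (FractionRing R)) =
            Polynomial.C x * f.map (algebraMap R (FractionRing R)) := by
          rw [← Polynomial.map_mul, hh, hpmap]
        exact (mul_right_cancel₀ hfmap h2).symm
      refine ⟨h.coeff 0, ?_⟩
      have h3 := congrArg (fun p => Polynomial.coeff p 0) hCx
      simpa [Polynomial.coeff_map] using h3.symm
    · rintro _ ⟨r, rfl⟩ b hb
      exact ⟨r * b, by rw [map_mul]⟩
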